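/- arXiv:math/0610823 — 3 statements merged into one kernel-verified Lean document; each statement's English description precedes it below -/
import Mathlib

section
/- For every a ∈ A and every i ∈ N, the map σ_{i,a} restricts to a bijection from R⁺_a \ {α_{i,a}} onto R⁺_{i▷a} \ {α_{i,i▷a}}, i.e. σ_{i,a}(R⁺_a \ {α_{i,a}}) = R⁺_{i▷a} \ {α_{i,i▷a}}. -/
open Pointwise

variable {N : Type*} {A : Type*}

/-- The element `(i j)^m ▷ a` for the action of `F₂(N)` on `A`. -/
def altIter (act : N → A → A) (i j : N) (a : A) : ℕ → A
  | 0 => a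
  | m + 1 => act i (act j (altIter act i j a m))

/-- The set `Θ(i,j;a)`. -/
def ThetaSet (act : N → A → A) (i j : N) (a : A) : Set A :=
  {x | ∃ m : ℕ, x = altIter act i j a m ∨ x = altIter act j i a m}

/-- The set of `ℕ₀`-linear combinations of elements of `s`. -/
def NSpan (s : Set (N →₀ ℝ)) : Set (N →₀ ℝ) :=
  (AddSubmonoid.closure s : Set (N →₀ ℝ))

/-- A generalized root system: a transitive action of `F₂(N)` on `A` (axiom (1)),
roots `root a ⊆ ℝ^{(N)}` with simple roots `α n a` forming a basis (axiom (2)),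
and maps `σ i a ∈ GL(ℝ^{(N)})`, satisfying axioms (3)-(7). -/
structure GRS (N : Type*) (A : Type*) where
  act : N → A → A
  act_invol : ∀ n a, act n (act n a) = a
  act_trans : ∀ a b : A, ∃ l : List N, l.foldr act a = b
  root : A → Set (N →₀ ℝ)
  α : N → A → N →₀ ℝ
  α_mem : ∀ n a, α n a ∈ root a
  α_indep : ∀ a, LinearIndependent ℝ fun n => α n a
  α_span : ∀ a, Submodule.span ℝ (Set.range fun n => α n a) = ⊤
  σ : N → A → (N →₀ ℝ) ≃ₗ[ℝ] (N →₀ ℝ)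
  ax3 : ∀ a, root a =
    root a ∩ NSpan (Set.range fun n => α n a) ∪ -(root a ∩ NSpan (Set.range fun n => α n a))
  ax4 : ∀ i a, (Set.range fun r : ℝ => r • α i a) ∩ root a = {α i a, -α i a}
  ax5_root : ∀ i a, ⇑(σ i a) '' root a = root (act i a)
  ax5_diag : ∀ i a, σ i a (α i a) = -α i (act i a)
  ax5_off : ∀ i a j, j ≠ i →
    ∃ m : ℕ, σ i a (α j a) = α j (act i a) + (m : ℝ) • α i (act i a)
  ax6 : ∀ i a v, σ i (act i a) (σ i a v) = v
  ax7 : ∀ a (i j : N), i ≠ j →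
    (root a ∩ {β | ∃ p q : ℕ, β = (p : ℝ) • α i a + (q : ℝ) • α j a}).Finite →
    (ThetaSet act i j a).Finite ∧
      (ThetaSet act i j a).ncard ∣
        (root a ∩ {β | ∃ p q : ℕ, β = (p : ℝ) • α i a + (q : ℝ) • α j a}).ncard

/-- The positive roots `R⁺_a`. -/
def GRS.pos (G : GRS N A) (a : A) : Set (N →₀ ℝ) :=
  G.root a ∩ NSpan (Set.range fun n => G.α n a)

/-- The target `i₁ ⋯ i_m ▷ a` of the word `(i₁, …, i_m)` at `a`. -/
def GRS.target (G : GRS N A) (l : List N) (a : A) : A :=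
  l.foldr G.act a

/-- The σ-composite `σ_{i₁,b₁} ∘ ⋯ ∘ σ_{i_m,b_m}` of the word `(i₁, …, i_m)` at `a`. -/
noncomputable def GRS.wmap (G : GRS N A) : List N → A → (N →₀ ℝ) ≃ₗ[ℝ] (N →₀ ℝ)
  | [], _ => LinearEquiv.refl ℝ _
  | i :: l, a => (G.wmap l a).trans (G.σ i (G.target l a))

/-- The length `ℓ` of a word at `a`: the minimal length of a word at `a`
with the same target and the same σ-composite. -/
noncomputable def GRS.len (G : GRS N A) (l : List N) (a : A) : ℕ :=
  sInf {m | ∃ l' : List N, l'.length = m ∧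
    G.target l' a = G.target l a ∧ G.wmap l' a = G.wmap l a}

/-- A word of length `m` at `a` is reduced if `ℓ = m`. -/
def GRS.Reduced (G : GRS N A) (l : List N) (a : A) : Prop :=
  G.len l a = l.length

/-- `m_{i,j;a} = |R_a ∩ (ℕ₀ α_{i,a} + ℕ₀ α_{j,a})|`. -/
noncomputable def GRS.mij (G : GRS N A) (i j : N) (a : A) : ℕ :=
  (G.root a ∩ {β | ∃ p q : ℕ, β = (p : ℝ) • G.α i a + (q : ℝ) • G.α j a}).ncard

/-- The alternating word `(i₁, …, i_m)` with `i_k = i` for `k` odd (leftmost letter `i`). -/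
def altList (i j : N) : ℕ → List N
  | 0 => []
  | m + 1 => i :: altList j i m

/-- The alternating word of length `m` in the letters `i,j` whose rightmost letter is `i`. -/
def altR (i j : N) : ℕ → List N
  | 0 => []
  | m + 1 => altR j i m ++ [i]

/-- `a_m = i_m ⋯ i_1 ▷ a` for the alternating sequence with `i_k = i` for odd `k`. -/
def aIter (act : N → A → A) (i j : N) (a : A) : ℕ → A
  | 0 => a
  | m + 1 => act (if m % 2 = 0 then i else j) (aIter act i j a m)

/-- The set of real roots `R^{re}_a`. -/
def GRS.reroot (G : GRS N A) (a : A) : Set (N →₀ ℝ) :=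
  {β | ∃ (b : A) (l : List N) (n : N), G.target l b = a ∧ β = G.wmap l b (G.α n b)}

/-- The word `C(i,j;a)`: alternating of length `m_{i,j;a} - 1` with leftmost letter `i`. -/
noncomputable def GRS.Cword (G : GRS N A) (i j : N) (a : A) : List N :=
  altList i j (G.mij i j a - 1)

/-- The basis of `ℝ^{(N)}` given by the simple roots at `a`. -/
noncomputable def GRS.B (G : GRS N A) (a : A) : Module.Basis N ℝ (N →₀ ℝ) :=
  Module.Basis.mk (G.α_indep a) (G.α_span a).ge

lemma GRS.B_apply (G : GRS N A) (a : A) (n : N) : G.B a n = G.α n a :=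
  Module.Basis.mk_apply _ _ _

lemma GRS.mem_nspan_iff (G : GRS N A) (a : A) (β : N →₀ ℝ) :
    β ∈ NSpan (Set.range fun n => G.α n a) ↔ ∀ n, ∃ k : ℕ, (G.B a).repr β n = k := by
  constructor
  · intro h n
    induction h using AddSubmonoid.closure_induction with
    | mem x hx =>
      obtain ⟨m, rfl⟩ := hx
      show ∃ k : ℕ, (G.B a).repr (G.α m a) n = k
      rw [← G.B_apply, Module.Basis.repr_self]
      by_cases hmn : m = n
      · exact ⟨1, by rw [hmn, Finsupp.single_eq_same]; norm_num⟩
      · exact ⟨0, by rw [Finsupp.single_eq_of_ne (Ne.symm hmn)]; norm_num⟩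
    | zero => exact ⟨0, by simp⟩
    | add x y hx hy ihx ihy =>
      obtain ⟨k₁, hk₁⟩ := ihx
      obtain ⟨k₂, hk₂⟩ := ihy
      exact ⟨k₁ + k₂, by rw [map_add, Finsupp.add_apply, hk₁, hk₂]; push_cast; ring⟩
  · intro h
    have hβ : β = ∑ n ∈ ((G.B a).repr β).support, ((G.B a).repr β n) • G.B a n := by
      conv_lhs => rw [← (G.B a).linearCombination_repr β]
      rw [Finsupp.linearCombination_apply, Finsupp.sum]
    rw [hβ]
    refine AddSubmonoid.sum_mem _ fun n _ => ?_
    obtain ⟨k, hk⟩ := h n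
    rw [hk, G.B_apply, Nat.cast_smul_eq_nsmul]
    show k • G.α n a ∈ AddSubmonoid.closure (Set.range fun n => G.α n a)
    exact nsmul_mem (AddSubmonoid.subset_closure (Set.mem_range_self n)) k

lemma GRS.repr_sigma (G : GRS N A) (a : A) (i j : N) (hj : j ≠ i) (v : N →₀ ℝ) :
    (G.B (G.act i a)).repr (G.σ i a v) j = (G.B a).repr v j := by
  have key : ((G.B (G.act i a)).coord j).comp ((G.σ i a : (N →₀ ℝ) →ₗ[ℝ] (N →₀ ℝ)))
      = (G.B a).coord j := by
    apply Module.Basis.ext (G.B a)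
    intro n
    rw [LinearMap.comp_apply, LinearEquiv.coe_coe, Module.Basis.coord_apply, Module.Basis.coord_apply,
      Module.Basis.repr_self, G.B_apply]
    by_cases hn : n = i
    · subst hn
      rw [G.ax5_diag, map_neg, ← G.B_apply, Module.Basis.repr_self, Finsupp.neg_apply,
        Finsupp.single_eq_of_ne hj, neg_zero]
    · obtain ⟨m, hm⟩ := G.ax5_off i a n hn
      rw [hm, map_add, map_smul, ← G.B_apply, ← G.B_apply, Module.Basis.repr_self, Module.Basis.repr_self,
        Finsupp.add_apply, Finsupp.smul_apply, Finsupp.single_eq_of_ne hj,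
        smul_zero, add_zero]
  have := congrArg (fun f => f v) key
  simpa using this

lemma GRS.repr_nonneg_of_nspan (G : GRS N A) (a : A) (β : N →₀ ℝ)
    (h : β ∈ NSpan (Set.range fun n => G.α n a)) (n : N) : 0 ≤ (G.B a).repr β n := by
  obtain ⟨k, hk⟩ := (G.mem_nspan_iff a β).1 h n
  rw [hk]; exact Nat.cast_nonneg k

lemma GRS.sigma_pos (G : GRS N A) (a : A) (i : N) (β : N →₀ ℝ)
    (hβ : β ∈ G.pos a) (hne : β ≠ G.α i a) :
    G.σ i a β ∈ G.pos (G.act i a) ∧ G.σ i a β ≠ G.α i (G.act i a) := by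
  set b := G.act i a with hb
  have hroot : G.σ i a β ∈ G.root b := by
    rw [← G.ax5_root]; exact ⟨β, hβ.1, rfl⟩
  -- first: σβ ≠ α i b
  have hne' : G.σ i a β ≠ G.α i b := by
    intro h
    have h6 := G.ax6 i a β
    rw [h] at h6
    rw [G.ax5_diag i b] at h6
    have hiba : G.act i b = a := G.act_invol i a
    rw [hiba] at h6
    -- β = -α i a
    have : (G.B a).repr β i = -1 := by
      rw [← h6, map_neg, Finsupp.neg_apply, ← G.B_apply, Module.Basis.repr_self,
        Finsupp.single_eq_same]
    have := G.repr_nonneg_of_nspan a β hβ.2 i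
    linarith [this, ‹(G.B a).repr β i = -1›]
  refine ⟨⟨hroot, ?_⟩, hne'⟩
  -- σβ is positive
  have h3 := G.ax3 b
  have : G.σ i a β ∈ G.root b ∩ NSpan (Set.range fun n => G.α n b) ∪
      -(G.root b ∩ NSpan (Set.range fun n => G.α n b)) := by rw [← h3]; exact hroot
  rcases this with h | h
  · exact h.2
  · exfalso
    rw [Set.mem_neg] at h
    -- coords of β vanish away from i
    have hzero : ∀ j, j ≠ i → (G.B a).repr β j = 0 := by
      intro j hj
      have h1 : 0 ≤ (G.B a).repr β j := G.repr_nonneg_of_nspan a β hβ.2 j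
      have h2 : 0 ≤ (G.B b).repr (-(G.σ i a β)) j := G.repr_nonneg_of_nspan b _ h.2 j
      rw [map_neg, Finsupp.neg_apply, G.repr_sigma a i j hj β] at h2
      linarith
    -- β = c • α i a
    have hrepr : (G.B a).repr β = Finsupp.single i ((G.B a).repr β i) := by
      ext j
      by_cases hj : j = i
      · subst hj; rw [Finsupp.single_eq_same]
      · rw [hzero j hj, Finsupp.single_eq_of_ne hj]
    have hβeq : β = ((G.B a).repr β i) • G.α i a := by
      apply (G.B a).repr.injective
      rw [map_smul, ← G.B_apply, Module.Basis.repr_self, hrepr, Finsupp.smul_single, smul_eq_mul,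
        mul_one, Finsupp.single_eq_same]
    have hmem : β ∈ (Set.range fun r : ℝ => r • G.α i a) ∩ G.root a :=
      ⟨⟨(G.B a).repr β i, hβeq.symm⟩, hβ.1⟩
    rw [G.ax4 i a] at hmem
    rcases hmem with h' | h'
    · exact hne h'
    · -- β = -α i a: coordinate -1, contradiction
      have : (G.B a).repr β i = -1 := by
        rw [Set.mem_singleton_iff] at h'
        rw [h', map_neg, Finsupp.neg_apply, ← G.B_apply, Module.Basis.repr_self,
          Finsupp.single_eq_same]
      have := G.repr_nonneg_of_nspan a β hβ.2 i
      linarith [this, ‹(G.B a).repr β i = -1›]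

/-- `σ_{i,a}` restricts to a bijection from `R⁺_a \ {α_{i,a}}`
onto `R⁺_{i▷a} \ {α_{i,i▷a}}`. -/
theorem stmt0 [Nonempty N] [Nonempty A] (G : GRS N A) (a : A) (i : N) :
    ⇑(G.σ i a) '' (G.pos a \ {G.α i a}) =
      G.pos (G.act i a) \ {G.α i (G.act i a)} := by
  apply Set.Subset.antisymm
  · rintro x ⟨β, ⟨hβpos, hβne⟩, rfl⟩
    obtain ⟨h1, h2⟩ := G.sigma_pos a i β hβpos (by simpa using hβne)
    exact ⟨h1, by simpa using h2⟩
  · rintro x ⟨hx, hxne⟩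
    set b := G.act i a with hb
    have hab : G.act i b = a := G.act_invol i a
    obtain ⟨h1, h2⟩ := G.sigma_pos b i x hx (by simpa using hxne)
    rw [hab] at h1 h2
    refine ⟨G.σ i b x, ⟨h1, by simpa using h2⟩, ?_⟩
    have := G.ax6 i b x
    rwa [hab] at this
end

section
/- Let m ∈ ℕ₀, (i_1, …, i_m) ∈ N^m and a ∈ A; for 1 ≤ r ≤ m set a_r := i_r⋯i_m ▷ a, and let w be the σ-composite of the word (i_1, …, i_m) at a. Then the set w(R⁺_a) ∩ (−R⁺_{a_1}) is finite and m − |w(R⁺_a) ∩ (−R⁺_{a_1})| is a nonnegative even integer. Moreover, if |w(R⁺_a) ∩ (−R⁺_{a_1})| = m, then w(R⁺_a) ∩ (−R⁺_{a_1}) = { −v_r(α_{i_r,a_r}) : 1 ≤ r ≤ m }, where v_r denotes the σ-composite of the word (i_1, …, i_{r−1}) at a_r. -/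
open Pointwise

variable {N : Type*} {A : Type*}

set_option linter.unusedSectionVars false
section Infra
variable [Nonempty N] (G : GRS N A)

noncomputable def GRS.bas (G : GRS N A) (a : A) : Module.Basis N ℝ (N →₀ ℝ) :=
  Module.Basis.mk (G.α_indep a) (by rw [G.α_span])

lemma GRS.bas_apply (a : A) (n : N) : G.bas a n = G.α n a := Module.Basis.mk_apply _ _ _

lemma GRS.repr_α (a : A) (n : N) : (G.bas a).repr (G.α n a) = Finsupp.single n 1 := by
  rw [← G.bas_apply, Module.Basis.repr_self]

lemma GRS.mem_NSpan_iff (a : A) (β : N →₀ ℝ) :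
    β ∈ NSpan (Set.range fun n => G.α n a) ↔ ∀ n, ∃ k : ℕ, ((G.bas a).repr β) n = k := by
  constructor
  · intro h
    induction h using AddSubmonoid.closure_induction with
    | mem x hx =>
      obtain ⟨m, rfl⟩ := hx
      intro n
      have : (fun n => G.α n a) m = G.α m a := rfl
      rw [this, G.repr_α]
      by_cases hmn : m = n
      · exact ⟨1, by simp [hmn]⟩
      · exact ⟨0, by simp [Finsupp.single_apply, hmn]⟩
    | zero => intro n; exact ⟨0, by simp⟩
    | add x y _ _ hx hy =>
      intro n
      obtain ⟨k, hk⟩ := hx n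
      obtain ⟨k', hk'⟩ := hy n
      exact ⟨k + k', by simp [map_add, hk, hk']⟩
  · intro h
    have htot := Module.Basis.linearCombination_repr (G.bas a) β
    rw [Finsupp.linearCombination_apply] at htot
    rw [← htot]
    rw [Finsupp.sum]
    apply sum_mem
    intro n _
    obtain ⟨k, hk⟩ := h n
    rw [hk, G.bas_apply, Nat.cast_smul_eq_nsmul]
    exact nsmul_mem (AddSubmonoid.subset_closure (Set.mem_range.mpr ⟨n, rfl⟩)) k

end Infra
section Infra2
open scoped Classical
variable [Nonempty N] (G : GRS N A)

lemma GRS.α_ne_zero (a : A) (i : N) : G.α i a ≠ 0 := by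
  have := (G.bas a).ne_zero i; rwa [G.bas_apply] at this

lemma GRS.zero_not_root (a : A) : (0 : N →₀ ℝ) ∉ G.root a := by
  intro h
  obtain ⟨i⟩ := ‹Nonempty N›
  have h0 : (0 : N →₀ ℝ) ∈ (Set.range fun r : ℝ => r • G.α i a) ∩ G.root a :=
    ⟨⟨0, by simp⟩, h⟩
  rw [G.ax4] at h0
  rcases h0 with h0 | h0
  · exact G.α_ne_zero a i h0.symm
  · exact G.α_ne_zero a i (neg_eq_zero.mp h0.symm)

lemma GRS.root_eq (a : A) : G.root a = G.pos a ∪ -(G.pos a) := G.ax3 a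

lemma GRS.pos_coords {a : A} {β : N →₀ ℝ} (hβ : β ∈ G.pos a) :
    ∀ n, ∃ k : ℕ, ((G.bas a).repr β) n = k := (G.mem_NSpan_iff a β).mp hβ.2

lemma GRS.not_pos_neg_pos {a : A} {β : N →₀ ℝ} (hβ : β ∈ G.pos a) (hβ' : -β ∈ G.pos a) :
    False := by
  have hz : β = 0 := by
    have : (G.bas a).repr β = 0 := by
      ext n
      obtain ⟨k, hk⟩ := G.pos_coords hβ n
      obtain ⟨k', hk'⟩ := G.pos_coords hβ' n
      rw [map_neg, Finsupp.neg_apply, hk] at hk'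
      have hk0 : (k : ℝ) = 0 := by
        have h1 : (0:ℝ) ≤ k := Nat.cast_nonneg k
        have h2 : (0:ℝ) ≤ k' := Nat.cast_nonneg k'
        linarith
      simpa [hk0] using hk
    simpa using congrArg (G.bas a).repr.symm this
  exact G.zero_not_root a (hz ▸ hβ.1)

lemma GRS.α_pos (a : A) (i : N) : G.α i a ∈ G.pos a := by
  refine ⟨G.α_mem i a, (G.mem_NSpan_iff a _).mpr fun n => ?_⟩
  rw [G.repr_α]
  by_cases h : i = n
  · exact ⟨1, by simp [h]⟩
  · exact ⟨0, by simp [Finsupp.single_apply, h]⟩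

lemma GRS.neg_α_not_pos (a : A) (i : N) : -G.α i a ∉ G.pos a :=
  fun h => G.not_pos_neg_pos (G.α_pos a i) h

lemma GRS.repr_σα {a : A} {i : N} (n n₀ : N) (hn₀ : n₀ ≠ i) :
    ((G.bas (G.act i a)).repr (G.σ i a (G.α n a))) n₀ = if n = n₀ then 1 else 0 := by
  by_cases hni : n = i
  · subst hni
    rw [G.ax5_diag, map_neg, G.repr_α]
    simp [Finsupp.single_apply, hn₀.symm, fun h : n = n₀ => hn₀ h.symm]
  · obtain ⟨m, hm⟩ := G.ax5_off i a n hni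
    rw [hm, map_add, map_smul, G.repr_α, G.repr_α]
    simp [Finsupp.single_apply, Ne.symm hn₀]

/-- Lemma A: simple reflections send other positive roots to positive roots. -/
lemma GRS.σ_pos {a : A} {i : N} {β : N →₀ ℝ} (hβ : β ∈ G.pos a) (hne : β ≠ G.α i a) :
    G.σ i a β ∈ G.pos (G.act i a) := by
  have hroot : G.σ i a β ∈ G.root (G.act i a) := by
    rw [← G.ax5_root]; exact ⟨β, hβ.1, rfl⟩
  set c := (G.bas a).repr β with hc
  -- find n₀ ≠ i with c n₀ ≠ 0
  have hn₀ : ∃ n₀, n₀ ≠ i ∧ c n₀ ≠ 0 := by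
    by_contra hcon
    push_neg at hcon
    have hrepr : c = Finsupp.single i (c i) := by
      ext n
      by_cases h : n = i
      · simp [h, Finsupp.single_apply]
      · rw [Finsupp.single_apply, hcon n h, if_neg (fun hh : i = n => h hh.symm)]
    have hβeq : β = c i • G.α i a := by
      apply (G.bas a).repr.injective
      rw [map_smul, G.repr_α, ← hc, hrepr]
      ext n; simp [Finsupp.single_apply]
    have hmem : β ∈ (Set.range fun r : ℝ => r • G.α i a) ∩ G.root a := ⟨⟨c i, hβeq.symm⟩, hβ.1⟩
    rw [G.ax4] at hmem
    rcases hmem with h | h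
    · exact hne h
    · exact G.neg_α_not_pos a i (h ▸ hβ)
  obtain ⟨n₀, hn₀i, hn₀c⟩ := hn₀
  -- compute the n₀ coordinate of σ β
  have hsum : (Finsupp.sum c fun n r => r • G.α n a) = β := by
    have htot := Module.Basis.linearCombination_repr (G.bas a) β
    rw [Finsupp.linearCombination_apply] at htot
    simpa [G.bas_apply] using htot
  have key : ((G.bas (G.act i a)).repr (G.σ i a β)) n₀ = c n₀ := by
    rw [← hsum, map_finsuppSum, map_finsuppSum, Finsupp.sum_apply, Finsupp.sum]
    rw [Finset.sum_eq_single n₀]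
    · simp [G.repr_σα n₀ n₀ hn₀i]
    · intro b _ hb
      simp [map_smul, Finsupp.smul_apply, G.repr_σα b n₀ hn₀i, hb]
    · intro hn
      rw [Finsupp.notMem_support_iff] at hn
      simp [hn]
  -- conclude
  rw [G.root_eq] at hroot
  rcases hroot with h | h
  · exact h
  · exfalso
    rw [Set.mem_neg] at h
    obtain ⟨k, hk⟩ := G.pos_coords h n₀
    obtain ⟨k', hk'⟩ := (G.mem_NSpan_iff a β).mp hβ.2 n₀
    rw [map_neg, Finsupp.neg_apply, key] at hk
    have hkc : c n₀ = (k' : ℝ) := by rw [hc]; exact hk'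
    have h1 : (0:ℝ) ≤ k := Nat.cast_nonneg k
    have h2 : (0:ℝ) ≤ k' := Nat.cast_nonneg k'
    have h3 : (k':ℝ) ≠ 0 := by rw [← hkc]; exact hn₀c
    have : (k':ℝ) > 0 := lt_of_le_of_ne h2 (Ne.symm h3)
    rw [hkc] at hk
    linarith [hk]

end Infra2
section Infra3
variable [Nonempty N] (G : GRS N A)

lemma GRS.σ_neg_α {a : A} {i : N} : G.σ i a (-G.α i a) = G.α i (G.act i a) := by
  rw [map_neg, G.ax5_diag, neg_neg]

/-- Lemma B: description of roots sent to negative roots by a simple reflection. -/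
lemma GRS.σ_neg_pos_iff {b : A} {i : N} {y : N →₀ ℝ} (hy : y ∈ G.root b) :
    G.σ i b y ∈ -G.pos (G.act i b) ↔ (y ∈ -G.pos b ∧ y ≠ -G.α i b) ∨ y = G.α i b := by
  constructor
  · intro h
    rw [Set.mem_neg] at h
    rw [G.root_eq] at hy
    rcases hy with hy | hy
    · by_cases hne : y = G.α i b
      · exact Or.inr hne
      · exact absurd (G.σ_pos hy hne) (fun hp => G.not_pos_neg_pos hp h)
    · by_cases hne : y = -G.α i b
      · subst hne
        rw [G.σ_neg_α] at h
        exact absurd h (G.neg_α_not_pos _ i)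
      · exact Or.inl ⟨hy, hne⟩
  · rintro (⟨hy', hne⟩ | rfl)
    · rw [Set.mem_neg, ← map_neg]
      rw [Set.mem_neg] at hy'
      exact G.σ_pos hy' (fun hh => hne (by rw [← neg_neg y, hh]))
    · rw [G.ax5_diag, Set.mem_neg, neg_neg]
      exact G.α_pos _ i

lemma GRS.target_nil (a : A) : G.target [] a = a := rfl

lemma GRS.target_cons (i : N) (l : List N) (a : A) :
    G.target (i :: l) a = G.act i (G.target l a) := rfl

lemma GRS.wmap_nil (a : A) : G.wmap [] a = LinearEquiv.refl ℝ _ := rfl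

lemma GRS.wmap_cons (i : N) (l : List N) (a : A) :
    G.wmap (i :: l) a = (G.wmap l a).trans (G.σ i (G.target l a)) := rfl

lemma GRS.wmap_cons_coe (i : N) (l : List N) (a : A) :
    ⇑(G.wmap (i :: l) a) = ⇑(G.σ i (G.target l a)) ∘ ⇑(G.wmap l a) := rfl

lemma GRS.target_append (l₁ l₂ : List N) (a : A) :
    G.target (l₁ ++ l₂) a = G.target l₁ (G.target l₂ a) :=
  List.foldr_append

lemma GRS.target_take_drop (l : List N) (r : ℕ) (a : A) :
    G.target (l.take r) (G.target (l.drop r) a) = G.target l a := by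
  rw [← G.target_append, List.take_append_drop]

lemma GRS.wmap_root (l : List N) (a : A) :
    ⇑(G.wmap l a) '' G.root a = G.root (G.target l a) := by
  induction l with
  | nil =>
    rw [G.wmap_nil, G.target_nil]
    exact Set.image_id _
  | cons i l ih =>
    rw [G.wmap_cons_coe, Set.image_comp, ih, G.ax5_root, G.target_cons]

/-- The step identity for inversion sets. -/
lemma GRS.inv_step (i : N) (l' : List N) (a : A) :
    ⇑(G.wmap (i :: l') a) '' G.pos a ∩ -G.pos (G.target (i :: l') a) =
      ⇑(G.σ i (G.target l' a)) ''
        (((⇑(G.wmap l' a) '' G.pos a ∩ -G.pos (G.target l' a)) \ {-G.α i (G.target l' a)}) ∪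
          (⇑(G.wmap l' a) '' G.pos a ∩ {G.α i (G.target l' a)})) := by
  set b := G.target l' a with hb
  ext x
  constructor
  · rintro ⟨⟨β, hβ, hx⟩, hneg⟩
    rw [G.wmap_cons_coe] at hx
    simp only [Function.comp_apply] at hx
    set y := G.wmap l' a β with hy
    have hyroot : y ∈ G.root b := by
      rw [← G.wmap_root l' a]; exact ⟨β, hβ.1, rfl⟩
    have hσy : G.σ i b y ∈ -G.pos (G.act i b) := by
      rw [hx]; rwa [G.target_cons] at hneg
    rcases (G.σ_neg_pos_iff hyroot).mp hσy with ⟨h1, h2⟩ | h1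
    · exact ⟨y, Or.inl ⟨⟨⟨β, hβ, rfl⟩, h1⟩, h2⟩, hx⟩
    · exact ⟨y, Or.inr ⟨⟨β, hβ, rfl⟩, h1⟩, hx⟩
  · rintro ⟨y, hy, hx⟩
    have hmem : (∃ β ∈ G.pos a, G.wmap l' a β = y) ∧
        ((y ∈ -G.pos b ∧ y ≠ -G.α i b) ∨ y = G.α i b) := by
      rcases hy with ⟨⟨⟨β, hβ, hw⟩, h1⟩, h2⟩ | ⟨⟨β, hβ, hw⟩, h1⟩
      · exact ⟨⟨β, hβ, hw⟩, Or.inl ⟨h1, h2⟩⟩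
      · exact ⟨⟨β, hβ, hw⟩, Or.inr h1⟩
    obtain ⟨⟨β, hβ, hw⟩, hcase⟩ := hmem
    have hyroot : y ∈ G.root b := by
      rw [← G.wmap_root l' a]; exact ⟨β, hβ.1, hw⟩
    constructor
    · refine ⟨β, hβ, ?_⟩
      rw [G.wmap_cons_coe]
      simp only [Function.comp_apply]
      rw [hw, hx]
    · rw [G.target_cons, ← hx]
      exact (G.σ_neg_pos_iff hyroot).mpr hcase

end Infra3
section Main
variable [Nonempty N] (G : GRS N A)

lemma GRS.Eset_cons (i : N) (l' : List N) (a : A) :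
    {β | ∃ k : Fin (i :: l').length,
        β = -(G.wmap ((i :: l').take (k : ℕ)) (G.target ((i :: l').drop (k : ℕ)) a)
            (G.α ((i :: l').get k) (G.target ((i :: l').drop (k : ℕ)) a)))} =
      insert (-G.α i (G.act i (G.target l' a)))
        (⇑(G.σ i (G.target l' a)) '' {β | ∃ k : Fin l'.length,
          β = -(G.wmap (l'.take (k : ℕ)) (G.target (l'.drop (k : ℕ)) a)
              (G.α (l'.get k) (G.target (l'.drop (k : ℕ)) a)))}) := by
  ext x
  simp only [Set.mem_setOf_eq, Set.mem_insert_iff, Set.mem_image]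
  constructor
  · rintro ⟨⟨kv, hkv⟩, rfl⟩
    match kv, hkv with
    | 0, hkv => exact Or.inl rfl
    | r + 1, hkv =>
      right
      have hr : r < l'.length := Nat.succ_lt_succ_iff.mp hkv
      refine ⟨-(G.wmap (l'.take r) (G.target (l'.drop r) a)
          (G.α (l'.get ⟨r, hr⟩) (G.target (l'.drop r) a))), ⟨⟨r, hr⟩, rfl⟩, ?_⟩
      show G.σ i (G.target l' a) (-(G.wmap (l'.take r) (G.target (l'.drop r) a)
          (G.α (l'.get ⟨r, hr⟩) (G.target (l'.drop r) a)))) =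
        -(G.σ i (G.target (l'.take r) (G.target (l'.drop r) a))
            (G.wmap (l'.take r) (G.target (l'.drop r) a)
              (G.α (l'.get ⟨r, hr⟩) (G.target (l'.drop r) a))))
      rw [G.target_take_drop, map_neg]
  · rintro (rfl | ⟨y, ⟨⟨r, hr⟩, rfl⟩, rfl⟩)
    · exact ⟨⟨0, Nat.succ_pos _⟩, rfl⟩
    · refine ⟨⟨r + 1, Nat.succ_lt_succ hr⟩, ?_⟩
      show G.σ i (G.target l' a) (-(G.wmap (l'.take r) (G.target (l'.drop r) a)
          (G.α (l'.get ⟨r, hr⟩) (G.target (l'.drop r) a)))) =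
        -(G.σ i (G.target (l'.take r) (G.target (l'.drop r) a))
            (G.wmap (l'.take r) (G.target (l'.drop r) a)
              (G.α (l'.get ⟨r, hr⟩) (G.target (l'.drop r) a))))
      rw [G.target_take_drop, map_neg]

end Main
/-- `w(R⁺_a) ∩ (−R⁺_{a₁})` is finite, `m` minus its cardinality is a
nonnegative even integer, and if the cardinality equals `m` then the set consists of the
elements `−v_r(α_{i_r,a_r})`, `1 ≤ r ≤ m`. -/
theorem stmt2 [Nonempty N] [Nonempty A] (G : GRS N A) (l : List N) (a : A) :
    (⇑(G.wmap l a) '' G.pos a ∩ -G.pos (G.target l a)).Finite ∧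
    (∃ k : ℕ, (⇑(G.wmap l a) '' G.pos a ∩ -G.pos (G.target l a)).ncard + 2 * k = l.length) ∧
    ((⇑(G.wmap l a) '' G.pos a ∩ -G.pos (G.target l a)).ncard = l.length →
      ⇑(G.wmap l a) '' G.pos a ∩ -G.pos (G.target l a) =
        {β | ∃ k : Fin l.length,
          β = -(G.wmap (l.take (k : ℕ)) (G.target (l.drop (k : ℕ)) a)
              (G.α (l.get k) (G.target (l.drop (k : ℕ)) a)))}) := by
  induction l with
  | nil =>
    have hempty : ⇑(G.wmap [] a) '' G.pos a ∩ -G.pos (G.target [] a) = (∅ : Set (N →₀ ℝ)) := by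
      ext x
      simp only [Set.mem_inter_iff, Set.mem_empty_iff_false, iff_false, not_and]
      rintro ⟨β, hβ, rfl⟩ hneg
      rw [G.target_nil, Set.mem_neg] at hneg
      exact G.not_pos_neg_pos (β := β) hβ hneg
    rw [hempty]
    refine ⟨Set.finite_empty, ⟨0, by simp⟩, fun _ => ?_⟩
    ext x
    simp only [Set.mem_empty_iff_false, Set.mem_setOf_eq, false_iff]
    rintro ⟨k, -⟩
    exact k.elim0
  | cons i l' ih =>
    obtain ⟨hfin', ⟨k', hk'⟩, heq'⟩ := ih
    have hstep := G.inv_step i l' a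
    by_cases hc : G.α i (G.target l' a) ∈ ⇑(G.wmap l' a) '' G.pos a
    · -- Case: α_{i,b} is in the image of the positive roots
      have hno : -G.α i (G.target l' a) ∉ ⇑(G.wmap l' a) '' G.pos a := by
        rintro ⟨β₂, hβ₂, hw2⟩
        obtain ⟨β₁, hβ₁, hw1⟩ := hc
        have hβ21 : β₂ = -β₁ := (G.wmap l' a).injective (by rw [hw2, map_neg, hw1])
        exact G.not_pos_neg_pos hβ₁ (hβ21 ▸ hβ₂)
      have hd : (⇑(G.wmap l' a) '' G.pos a ∩ -G.pos (G.target l' a)) \ {-G.α i (G.target l' a)} =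
          ⇑(G.wmap l' a) '' G.pos a ∩ -G.pos (G.target l' a) :=
        Set.diff_singleton_eq_self (fun h => hno h.1)
      have hsing : ⇑(G.wmap l' a) '' G.pos a ∩ {G.α i (G.target l' a)} =
          {G.α i (G.target l' a)} :=
        Set.inter_eq_right.mpr (Set.singleton_subset_iff.mpr hc)
      have hSeq : ⇑(G.wmap (i :: l') a) '' G.pos a ∩ -G.pos (G.target (i :: l') a) =
          insert (-G.α i (G.act i (G.target l' a)))
            (⇑(G.σ i (G.target l' a)) '' (⇑(G.wmap l' a) '' G.pos a ∩ -G.pos (G.target l' a))) := by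
        rw [hstep, hd, hsing, Set.image_union, Set.image_singleton, G.ax5_diag,
          Set.union_singleton]
      have hnm : -G.α i (G.act i (G.target l' a)) ∉
          ⇑(G.σ i (G.target l' a)) '' (⇑(G.wmap l' a) '' G.pos a ∩ -G.pos (G.target l' a)) := by
        rintro ⟨y, hy, hσ⟩
        have hyα : y = G.α i (G.target l' a) :=
          (G.σ i (G.target l' a)).injective (by rw [hσ, G.ax5_diag])
        rw [hyα] at hy
        exact G.not_pos_neg_pos (G.α_pos _ i) (Set.mem_neg.mp hy.2)
      have hfinI : (⇑(G.σ i (G.target l' a)) ''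
          (⇑(G.wmap l' a) '' G.pos a ∩ -G.pos (G.target l' a))).Finite := hfin'.image _
      have hcard : (⇑(G.wmap (i :: l') a) '' G.pos a ∩ -G.pos (G.target (i :: l') a)).ncard =
          (⇑(G.wmap l' a) '' G.pos a ∩ -G.pos (G.target l' a)).ncard + 1 := by
        rw [hSeq, Set.ncard_insert_of_notMem hnm hfinI,
          Set.ncard_image_of_injective _ (G.σ i (G.target l' a)).injective]
      refine ⟨hSeq ▸ hfinI.insert _, ⟨k', by simp only [List.length_cons]; omega⟩, fun hm => ?_⟩
      have hI : (⇑(G.wmap l' a) '' G.pos a ∩ -G.pos (G.target l' a)).ncard = l'.length := by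
        simp only [List.length_cons] at hm; omega
      rw [hSeq, heq' hI, G.Eset_cons]
    · -- Case: α_{i,b} is not in the image of the positive roots
      have hsing : ⇑(G.wmap l' a) '' G.pos a ∩ {G.α i (G.target l' a)} = ∅ :=
        Set.inter_singleton_eq_empty.mpr hc
      have hmem : -G.α i (G.target l' a) ∈
          ⇑(G.wmap l' a) '' G.pos a ∩ -G.pos (G.target l' a) := by
        have hαroot : G.α i (G.target l' a) ∈ G.root (G.target l' a) := G.α_mem i _
        rw [← G.wmap_root l' a] at hαroot
        obtain ⟨γ, hγ, hw⟩ := hαroot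
        rw [G.root_eq] at hγ
        rcases hγ with hγ | hγ
        · exact absurd ⟨γ, hγ, hw⟩ hc
        · rw [Set.mem_neg] at hγ
          refine ⟨⟨-γ, hγ, by rw [map_neg, hw]⟩, ?_⟩
          rw [Set.mem_neg, neg_neg]
          exact G.α_pos _ i
      have hSeq : ⇑(G.wmap (i :: l') a) '' G.pos a ∩ -G.pos (G.target (i :: l') a) =
          ⇑(G.σ i (G.target l' a)) ''
            ((⇑(G.wmap l' a) '' G.pos a ∩ -G.pos (G.target l' a)) \
              {-G.α i (G.target l' a)}) := by
        rw [hstep, hsing, Set.union_empty]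
      have hfinS : (⇑(G.wmap (i :: l') a) '' G.pos a ∩ -G.pos (G.target (i :: l') a)).Finite :=
        hSeq ▸ ((hfin'.sdiff).image _)
      have hcard : (⇑(G.wmap (i :: l') a) '' G.pos a ∩ -G.pos (G.target (i :: l') a)).ncard + 1 =
          (⇑(G.wmap l' a) '' G.pos a ∩ -G.pos (G.target l' a)).ncard := by
        rw [hSeq, Set.ncard_image_of_injective _ (G.σ i (G.target l' a)).injective]
        exact Set.ncard_diff_singleton_add_one hmem hfin'
      exact ⟨hfinS, ⟨k' + 1, by simp only [List.length_cons]; omega⟩,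
        fun hm => absurd hm (by simp only [List.length_cons]; omega)⟩
end

section
/- Let N' ⊆ N be a nonempty subset and let A' ⊆ A be an orbit of the subgroup F₂(N') ⊆ F₂(N) acting on A by the restriction of ▷. For a ∈ A' set π'_a := {α_{n,a} : n ∈ N'}, let U_a ⊆ V₀ be the linear span of π'_a, set R'_a := (ℤ-span of π'_a) ∩ R_a, and let φ_a : U_a → ℝ^{(N')} be the linear isomorphism sending α_{n,a} to the standard basis vector e_n for n ∈ N'. Then for every i ∈ N' and a ∈ A' the map σ_{i,a} maps U_a onto U_{i▷a}, and the data consisting of, for each a ∈ A', the roots φ_a(R'_a) ⊆ ℝ^{(N')} with simple roots {e_n : n ∈ N'}, and for each i ∈ N' the maps φ_{i▷a} ∘ σ_{i,a} ∘ φ_a^{−1} ∈ GL(ℝ^{(N')}), together with the restricted action of F₂(N') on A', satisfies all the axioms (3)–(7) of a generalized root system. -/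
open Pointwise

variable {N : Type*} {A : Type*}

section Aux
variable {ι M : Type*} [AddCommGroup M] [Module ℝ M] (B : Module.Basis ι ℝ M)

lemma mem_closure_range_basis_iff (x : M) :
    x ∈ AddSubmonoid.closure (Set.range ⇑B) ↔ ∀ i, ∃ k : ℕ, B.repr x i = (k : ℝ) := by
  constructor
  · intro hx
    induction hx using AddSubmonoid.closure_induction with
    | mem y hy =>
      obtain ⟨j, rfl⟩ := hy
      intro i
      rw [B.repr_self]
      by_cases h : i = j
      · exact ⟨1, by simp [h]⟩
      · exact ⟨0, by simp [Finsupp.single_apply, Ne.symm h]⟩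
    | zero => intro i; exact ⟨0, by simp⟩
    | add y z hy hz ihy ihz =>
      intro i
      obtain ⟨k, hk⟩ := ihy i; obtain ⟨m, hm⟩ := ihz i
      exact ⟨k + m, by simp [hk, hm]⟩
  · intro h
    have hx := B.linearCombination_repr x
    rw [Finsupp.linearCombination_apply, Finsupp.sum] at hx
    rw [← hx]
    refine AddSubmonoid.sum_mem _ fun i _ => ?_
    obtain ⟨k, hk⟩ := h i
    rw [hk, Nat.cast_smul_eq_nsmul]
    exact nsmul_mem (AddSubmonoid.subset_closure (Set.mem_range_self i)) k

lemma mem_group_closure_image_basis_iff (s : Set ι) (x : M) :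
    x ∈ AddSubgroup.closure (⇑B '' s) ↔
      (∀ i, ∃ k : ℤ, B.repr x i = (k : ℝ)) ∧ ∀ i ∉ s, B.repr x i = 0 := by
  constructor
  · intro hx
    induction hx using AddSubgroup.closure_induction with
    | mem y hy =>
      obtain ⟨j, hj, rfl⟩ := hy
      rw [B.repr_self]
      constructor
      · intro i
        by_cases h : i = j
        · exact ⟨1, by simp [h]⟩
        · exact ⟨0, by simp [Finsupp.single_apply, Ne.symm h]⟩
      · intro i hi
        have : i ≠ j := fun h => hi (h ▸ hj)
        simp [Finsupp.single_apply, Ne.symm this]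
    | zero => exact ⟨fun i => ⟨0, by simp⟩, fun i _ => by simp⟩
    | add y z hy hz ihy ihz =>
      refine ⟨fun i => ?_, fun i hi => ?_⟩
      · obtain ⟨k, hk⟩ := ihy.1 i; obtain ⟨m, hm⟩ := ihz.1 i
        exact ⟨k + m, by push_cast; simp [hk, hm]⟩
      · simp [ihy.2 i hi, ihz.2 i hi]
    | neg y hy ihy =>
      refine ⟨fun i => ?_, fun i hi => by simp [ihy.2 i hi]⟩
      obtain ⟨k, hk⟩ := ihy.1 i
      exact ⟨-k, by push_cast; simp [hk]⟩
  · rintro ⟨h1, h2⟩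
    have hx := B.linearCombination_repr x
    rw [Finsupp.linearCombination_apply, Finsupp.sum] at hx
    rw [← hx]
    refine AddSubgroup.sum_mem _ fun i hi => ?_
    have his : i ∈ s := by
      by_contra hc
      exact Finsupp.mem_support_iff.mp hi (h2 i hc)
    obtain ⟨k, hk⟩ := h1 i
    rw [hk, Int.cast_smul_eq_zsmul]
    exact zsmul_mem (AddSubgroup.subset_closure (Set.mem_image_of_mem _ his)) k

end Aux


namespace GRS
variable (G : GRS N A) (N' : Set N)

noncomputable def bas_s3 (a : A) : Module.Basis N ℝ (N →₀ ℝ) :=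
  Module.Basis.mk (G.α_indep a) (by rw [G.α_span])

lemma bas_apply_s3 (a : A) (n : N) : G.bas_s3 a n = G.α n a := Module.Basis.mk_apply _ _ _

lemma neg_mem_root {a : A} {β : N →₀ ℝ} (h : β ∈ G.root a) : -β ∈ G.root a := by
  rw [G.ax3 a] at h ⊢
  rcases h with h | h
  · exact Or.inr (by simpa [Set.mem_neg] using h)
  · exact Or.inl (by simpa [Set.mem_neg] using h)

noncomputable def usub (a : A) : Submodule ℝ (N →₀ ℝ) :=
  Submodule.span ℝ ((fun n => G.α n a) '' N')

lemma α_mem_usub {n : N} (hn : n ∈ N') (a : A) : G.α n a ∈ usub G N' a :=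
  Submodule.subset_span (Set.mem_image_of_mem _ hn)

lemma usub_le_map {i : N} (hi : i ∈ N') (a : A) :
    usub G N' a ≤ Submodule.comap ((G.σ i a : (N →₀ ℝ) →ₗ[ℝ] (N →₀ ℝ)))
      (usub G N' (G.act i a)) := by
  rw [usub, Submodule.span_le]
  rintro _ ⟨n, hn, rfl⟩
  simp only [Submodule.mem_comap, LinearEquiv.coe_coe, SetLike.mem_coe]
  by_cases h : n = i
  · subst h
    rw [G.ax5_diag]
    exact neg_mem (α_mem_usub G N' hn _)
  · obtain ⟨m, hm⟩ := G.ax5_off i a n h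
    rw [hm]
    exact add_mem (α_mem_usub G N' hn _) (Submodule.smul_mem _ _ (α_mem_usub G N' hi _))

lemma map_usub {i : N} (hi : i ∈ N') (a : A) :
    Submodule.map ((G.σ i a : (N →₀ ℝ) →ₗ[ℝ] (N →₀ ℝ))) (usub G N' a)
      = usub G N' (G.act i a) := by
  apply le_antisymm
  · rw [Submodule.map_le_iff_le_comap]
    exact usub_le_map G N' hi a
  · intro x hx
    have h2 := usub_le_map G N' hi (G.act i a)
    rw [G.act_invol] at h2
    have h2' := h2 hx
    rw [Submodule.mem_comap] at h2'
    refine ⟨G.σ i (G.act i a) x, h2', ?_⟩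
    simp only [LinearEquiv.coe_coe]
    have h3 := G.ax6 i (G.act i a) x
    rw [G.act_invol] at h3
    exact h3

/-- σ maps the `N'`-lattice-plus-root pair at `a` to that at `act i a`. -/
lemma sigma_zspan {i : N} (hi : i ∈ N') (a : A) {β : N →₀ ℝ}
    (hβ : β ∈ AddSubgroup.closure ((fun n => G.α n a) '' N')) :
    G.σ i a β ∈ AddSubgroup.closure ((fun n => G.α n (G.act i a)) '' N') := by
  have key : AddSubgroup.closure ((fun n => G.α n a) '' N') ≤
      (AddSubgroup.closure ((fun n => G.α n (G.act i a)) '' N')).comap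
        (G.σ i a).toLinearMap.toAddMonoidHom := by
    rw [AddSubgroup.closure_le]
    rintro _ ⟨n, hn, rfl⟩
    simp only [AddSubgroup.coe_comap, Set.mem_preimage, LinearMap.toAddMonoidHom_coe,
      LinearEquiv.coe_coe, SetLike.mem_coe]
    have hgen : ∀ m ∈ N',
        G.α m (G.act i a) ∈ AddSubgroup.closure ((fun n => G.α n (G.act i a)) '' N') :=
      fun m hm => AddSubgroup.subset_closure (Set.mem_image_of_mem _ hm)
    by_cases h : n = i
    · subst h
      rw [G.ax5_diag]
      exact neg_mem (hgen n hn)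
    · obtain ⟨m, hm⟩ := G.ax5_off i a n h
      rw [hm, Nat.cast_smul_eq_nsmul]
      exact add_mem (hgen n hn) (nsmul_mem (hgen i hi) m)
  exact key hβ

section Phi
variable (A' : Set A)
variable (φ : ∀ a : A', (Submodule.span ℝ ((fun n => G.α n (a : A)) '' N')) ≃ₗ[ℝ]
      (N' →₀ ℝ))

noncomputable def psi (a : A') : (N' →₀ ℝ) →ₗ[ℝ] (N →₀ ℝ) :=
  (Submodule.span ℝ ((fun n => G.α n (a : A)) '' N')).subtype ∘ₗ
    ((φ a).symm : (N' →₀ ℝ) →ₗ[ℝ] _)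

lemma psi_apply (a : A') (v : N' →₀ ℝ) :
    psi G N' A' φ a v = ((φ a).symm v : N →₀ ℝ) := rfl

lemma psi_inj (a : A') : Function.Injective (psi G N' A' φ a) := by
  intro x y h
  exact (φ a).symm.injective (Subtype.ext h)

variable (hφ : ∀ (a : A') (n : N')
      (h : G.α (n : N) (a : A) ∈ Submodule.span ℝ ((fun n => G.α n (a : A)) '' N')),
      φ a ⟨G.α (n : N) (a : A), h⟩ = Finsupp.single n 1)
include hφ

lemma psi_single_one (a : A') (n : N') :
    psi G N' A' φ a (Finsupp.single n 1) = G.α (n : N) (a : A) := by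
  have hmem : G.α (n : N) (a : A) ∈
      Submodule.span ℝ ((fun n => G.α n (a : A)) '' N') :=
    α_mem_usub G N' n.2 (a : A)
  have h1 := hφ a n hmem
  rw [psi_apply, ← h1, LinearEquiv.symm_apply_apply]

lemma psi_single (a : A') (n : N') (r : ℝ) :
    psi G N' A' φ a (Finsupp.single n r) = r • G.α (n : N) (a : A) := by
  have : (Finsupp.single n r : N' →₀ ℝ) = r • Finsupp.single n 1 := by
    rw [Finsupp.smul_single', mul_one]
  rw [this, map_smul, psi_single_one G N' A' φ hφ]

lemma repr_psi (a : A') (v : N' →₀ ℝ) :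
    (G.bas_s3 (a : A)).repr (psi G N' A' φ a v) = Finsupp.mapDomain Subtype.val v := by
  have key : ((G.bas_s3 (a : A)).repr : (N →₀ ℝ) →ₗ[ℝ] (N →₀ ℝ)) ∘ₗ psi G N' A' φ a
      = Finsupp.lmapDomain ℝ ℝ (Subtype.val : N' → N) := by
    apply Finsupp.lhom_ext
    intro n r
    simp only [LinearMap.comp_apply, Finsupp.lmapDomain_apply, Finsupp.mapDomain_single]
    rw [psi_single G N' A' φ hφ, map_smul, LinearEquiv.coe_coe]
    have : (G.bas_s3 (a : A)).repr (G.α (n : N) (a : A)) = Finsupp.single (n : N) 1 := by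
      rw [← G.bas_apply_s3 (a : A) (n : N)]
      exact (G.bas_s3 (a : A)).repr_self _
    rw [this, Finsupp.smul_single', mul_one]
  exact LinearMap.congr_fun key v

lemma repr_psi_coe (a : A') (v : N' →₀ ℝ) (n : N') :
    (G.bas_s3 (a : A)).repr (psi G N' A' φ a v) (n : N) = v n := by
  rw [repr_psi G N' A' φ hφ, Finsupp.mapDomain_apply Subtype.val_injective]

lemma repr_psi_notmem (a : A') (v : N' →₀ ℝ) {n : N} (hn : n ∉ N') :
    (G.bas_s3 (a : A)).repr (psi G N' A' φ a v) n = 0 := by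
  rw [repr_psi G N' A' φ hφ]
  exact Finsupp.mapDomain_notin_range _ _ (by rwa [Subtype.range_val])

lemma psi_mem_zspan_iff (a : A') (v : N' →₀ ℝ) :
    psi G N' A' φ a v ∈ AddSubgroup.closure ((fun n => G.α n (a : A)) '' N') ↔
      ∀ n : N', ∃ k : ℤ, v n = (k : ℝ) := by
  have himg : (fun n => G.α n (a : A)) '' N' = ⇑(G.bas_s3 (a : A)) '' N' :=
    Set.image_congr fun n _ => (G.bas_apply_s3 (a : A) n).symm
  rw [himg, mem_group_closure_image_basis_iff]
  constructor
  · rintro ⟨h1, -⟩ n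
    obtain ⟨k, hk⟩ := h1 (n : N)
    exact ⟨k, by rw [← repr_psi_coe G N' A' φ hφ a v n, hk]⟩
  · intro h
    refine ⟨fun i => ?_, fun i hi => repr_psi_notmem G N' A' φ hφ a v hi⟩
    by_cases hi : i ∈ N'
    · obtain ⟨k, hk⟩ := h ⟨i, hi⟩
      exact ⟨k, by rw [repr_psi_coe G N' A' φ hφ a v ⟨i, hi⟩]; exact hk⟩
    · exact ⟨0, by rw [repr_psi_notmem G N' A' φ hφ a v hi]; simp⟩

lemma psi_mem_nspan_iff (a : A') (v : N' →₀ ℝ) :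
    psi G N' A' φ a v ∈ NSpan (Set.range fun n => G.α n (a : A)) ↔
      ∀ n : N', ∃ k : ℕ, v n = (k : ℝ) := by
  have himg : (Set.range fun n => G.α n (a : A)) = Set.range ⇑(G.bas_s3 (a : A)) := by
    ext x
    simp only [Set.mem_range]
    exact ⟨fun ⟨n, hn⟩ => ⟨n, by rw [G.bas_apply_s3]; exact hn⟩,
      fun ⟨n, hn⟩ => ⟨n, by rw [← G.bas_apply_s3 (a : A) n]; exact hn⟩⟩
  have hset : NSpan (Set.range fun n => G.α n (a : A))
      = (AddSubmonoid.closure (Set.range ⇑(G.bas_s3 (a : A))) : Set _) := by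
    rw [NSpan, himg]
  rw [hset, SetLike.mem_coe, mem_closure_range_basis_iff]
  constructor
  · intro h1 n
    obtain ⟨k, hk⟩ := h1 (n : N)
    exact ⟨k, by rw [← repr_psi_coe G N' A' φ hφ a v n, hk]⟩
  · intro h i
    by_cases hi : i ∈ N'
    · obtain ⟨k, hk⟩ := h ⟨i, hi⟩
      exact ⟨k, by rw [repr_psi_coe G N' A' φ hφ a v ⟨i, hi⟩]; exact hk⟩
    · exact ⟨0, by rw [repr_psi_notmem G N' A' φ hφ a v hi]; simp⟩

lemma v_mem_nspan_iff (v : N' →₀ ℝ) :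
    v ∈ NSpan (Set.range fun n : N' => Finsupp.single n (1 : ℝ)) ↔
      ∀ n : N', ∃ k : ℕ, v n = (k : ℝ) := by
  have himg : (Set.range fun n : N' => Finsupp.single n (1 : ℝ))
      = Set.range ⇑(Finsupp.basisSingleOne (R := ℝ) (ι := N')) := by
    rw [Finsupp.coe_basisSingleOne]
  have hset : NSpan (Set.range fun n : N' => Finsupp.single n (1 : ℝ))
      = (AddSubmonoid.closure (Set.range ⇑(Finsupp.basisSingleOne (R := ℝ) (ι := N'))) : Set _) := by
    rw [NSpan, himg]
  rw [hset, SetLike.mem_coe, mem_closure_range_basis_iff]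
  simp [Finsupp.basisSingleOne_repr]


variable (hclosed : ∀ i ∈ N', ∀ a ∈ A', G.act i a ∈ A')

noncomputable def rσ (i : N') (b : A') : (N' →₀ ℝ) ≃ₗ[ℝ] (N' →₀ ℝ) :=
  ((φ b).symm.trans ((G.σ (i : N) (b : A)).ofSubmodules
      (Submodule.span ℝ ((fun n => G.α n (b : A)) '' N'))
      (Submodule.span ℝ ((fun n => G.α n (G.act (i : N) (b : A))) '' N'))
      (map_usub G N' i.2 (b : A)))).trans
    (φ ⟨G.act (i : N) (b : A), hclosed (i : N) i.2 (b : A) b.2⟩)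

omit hφ in
lemma rσ_spec (i : N') (b : A') (v : N' →₀ ℝ) :
    psi G N' A' φ ⟨G.act (i : N) (b : A), hclosed (i : N) i.2 (b : A) b.2⟩
      (rσ G N' A' φ hclosed i b v) = G.σ (i : N) (b : A) (psi G N' A' φ b v) := by
  rw [psi_apply, psi_apply, rσ]
  simp only [LinearEquiv.trans_apply, LinearEquiv.symm_apply_apply]
  exact LinearEquiv.ofSubmodules_apply _ _ _

omit hφ in
lemma exists_foldr (act' : N' → A' → A')
    (h : ∀ (i : N') (b : A'), (act' i b : A) = G.act (i : N) (b : A))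
    (a : A') (l : List N) (hl : ∀ i ∈ l, i ∈ N') :
    ∃ l' : List N', ((l'.foldr act' a : A') : A) = l.foldr G.act (a : A) := by
  induction l with
  | nil => exact ⟨[], rfl⟩
  | cons x xs ih =>
    obtain ⟨l', hl'⟩ := ih (fun i hi => hl i (List.mem_cons_of_mem _ hi))
    refine ⟨⟨x, hl x List.mem_cons_self⟩ :: l', ?_⟩
    rw [List.foldr_cons, List.foldr_cons, h, hl']


end Phi


end GRS

/-- restriction to a sub-root-system: for a nonempty subset `N' ⊆ N` and an
orbit `A' ⊆ A` of `F₂(N')`, each `σ_{i,a}` (`i ∈ N'`, `a ∈ A'`) maps the span `U_a` of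
`π'_a` onto `U_{i▷a}`, and the restricted data (transported to `ℝ^{(N')}` by the
isomorphisms `φ_a` sending `α_{n,a}` to `e_n`) forms a generalized root system. -/
theorem stmt3 [Nonempty N] [Nonempty A] (G : GRS N A)
    (N' : Set N) (hN' : N'.Nonempty) (A' : Set A) (hA' : A'.Nonempty)
    (hclosed : ∀ i ∈ N', ∀ a ∈ A', G.act i a ∈ A')
    (horbit : ∀ a ∈ A', ∀ b ∈ A',
      ∃ l : List N, (∀ i ∈ l, i ∈ N') ∧ l.foldr G.act a = b)
    (φ : ∀ a : A', (Submodule.span ℝ ((fun n => G.α n (a : A)) '' N')) ≃ₗ[ℝ]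
      (N' →₀ ℝ))
    (hφ : ∀ (a : A') (n : N')
      (h : G.α (n : N) (a : A) ∈ Submodule.span ℝ ((fun n => G.α n (a : A)) '' N')),
      φ a ⟨G.α (n : N) (a : A), h⟩ = Finsupp.single n 1) :
    (∀ i ∈ N', ∀ a ∈ A',
      ⇑(G.σ i a) '' (Submodule.span ℝ ((fun n => G.α n a) '' N') : Set (N →₀ ℝ)) =
        (Submodule.span ℝ ((fun n => G.α n (G.act i a)) '' N') : Set (N →₀ ℝ))) ∧
    ∃ G' : GRS N' A',
      (∀ (n : N') (b : A'), (G'.act n b : A) = G.act (n : N) (b : A)) ∧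
      (∀ (n : N') (b : A'), G'.α n b = Finsupp.single n 1) ∧
      (∀ b : A', G'.root b = {v : N' →₀ ℝ |
        ((φ b).symm v : N →₀ ℝ) ∈
          (AddSubgroup.closure ((fun n => G.α n (b : A)) '' N') : Set (N →₀ ℝ)) ∩
            G.root (b : A)}) ∧
      (∀ (i : N') (b c : A'), (c : A) = G.act (i : N) (b : A) → ∀ v : N' →₀ ℝ,
        ((φ c).symm (G'.σ i b v) : N →₀ ℝ) = G.σ (i : N) (b : A) ((φ b).symm v)) := by
  classical
  set actL : N' → A' → A' :=
    fun i b => ⟨G.act (i : N) (b : A), hclosed (i : N) i.2 (b : A) b.2⟩ with hactL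
  have Hpt : ∀ (j : N') (c d : A'), (d : A) = G.act (j : N) (c : A) → ∀ w : N' →₀ ℝ,
      GRS.psi G N' A' φ d (GRS.rσ G N' A' φ hclosed j c w)
        = G.σ (j : N) (c : A) (GRS.psi G N' A' φ c w) := by
    intro j c d hdc w
    have hd : d = ⟨G.act (j : N) (c : A), hclosed (j : N) j.2 (c : A) c.2⟩ := Subtype.ext hdc
    rw [hd]
    exact GRS.rσ_spec G N' A' φ hclosed j c w
  have Hinv : ∀ (j : N') (c d : A'), (d : A) = G.act (j : N) (c : A) → ∀ w : N' →₀ ℝ,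
      GRS.rσ G N' A' φ hclosed j d (GRS.rσ G N' A' φ hclosed j c w) = w := by
    intro j c d hdc w
    apply GRS.psi_inj G N' A' φ c
    have hcd : (c : A) = G.act (j : N) (d : A) := by rw [hdc, G.act_invol]
    rw [Hpt j d c hcd, Hpt j c d hdc w, hdc]
    exact G.ax6 (j : N) (c : A) _
  have Hmem : ∀ (j : N') (c d : A'), (d : A) = G.act (j : N) (c : A) → ∀ w : N' →₀ ℝ,
      GRS.psi G N' A' φ c w ∈
        (AddSubgroup.closure ((fun n => G.α n (c : A)) '' N') : Set (N →₀ ℝ)) ∩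
          G.root (c : A) →
      GRS.psi G N' A' φ d (GRS.rσ G N' A' φ hclosed j c w) ∈
        (AddSubgroup.closure ((fun n => G.α n (d : A)) '' N') : Set (N →₀ ℝ)) ∩
          G.root (d : A) := by
    intro j c d hdc w hw
    rw [Hpt j c d hdc w, hdc]
    exact ⟨GRS.sigma_zspan G N' j.2 (c : A) hw.1,
      by rw [← G.ax5_root]; exact ⟨_, hw.2, rfl⟩⟩
  refine ⟨?_, {
      act := actL
      act_invol := fun n a => Subtype.ext (G.act_invol (n : N) (a : A))
      act_trans := ?_
      root := fun b => {v : N' →₀ ℝ |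
        ((φ b).symm v : N →₀ ℝ) ∈
          (AddSubgroup.closure ((fun n => G.α n (b : A)) '' N') : Set (N →₀ ℝ)) ∩
            G.root (b : A)}
      α := fun n _ => Finsupp.single n 1
      α_mem := ?_
      α_indep := ?_
      α_span := ?_
      σ := fun i b => GRS.rσ G N' A' φ hclosed i b
      ax3 := ?_
      ax4 := ?_
      ax5_root := ?_
      ax5_diag := ?_
      ax5_off := ?_
      ax6 := fun i b v => Hinv i b (actL i b) rfl v
      ax7 := ?_ }, fun n b => rfl, fun n b => rfl, fun b => rfl, ?_⟩
  -- conjunct 1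
  · intro i hi a ha
    have h := congrArg (fun s : Submodule ℝ (N →₀ ℝ) => (s : Set (N →₀ ℝ)))
      (GRS.map_usub G N' hi a)
    simp only [Submodule.map_coe, LinearEquiv.coe_coe, GRS.usub] at h
    exact h
  -- act_trans
  · intro a b
    obtain ⟨l, hl, hfold⟩ := horbit (a : A) a.2 (b : A) b.2
    obtain ⟨l', hl'⟩ := GRS.exists_foldr G N' A' actL (fun i b => rfl) a l hl
    exact ⟨l', Subtype.ext (by rw [hl', hfold])⟩
  -- α_mem
  · intro n b
    have hm : GRS.psi G N' A' φ b (Finsupp.single n 1) ∈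
        (AddSubgroup.closure ((fun n => G.α n (b : A)) '' N') : Set (N →₀ ℝ)) ∩
          G.root (b : A) := by
      rw [GRS.psi_single_one G N' A' φ hφ]
      exact ⟨AddSubgroup.subset_closure (Set.mem_image_of_mem _ n.2), G.α_mem _ _⟩
    exact hm
  -- α_indep
  · intro b
    have h := (Finsupp.basisSingleOne (R := ℝ) (ι := N')).linearIndependent
    rwa [Finsupp.coe_basisSingleOne] at h
  -- α_span
  · intro b
    have h := (Finsupp.basisSingleOne (R := ℝ) (ι := N')).span_eq
    rwa [Finsupp.coe_basisSingleOne] at h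
  -- ax3
  · intro b
    apply Set.Subset.antisymm
    · intro v hv
      have hv' : GRS.psi G N' A' φ b v ∈
          (AddSubgroup.closure ((fun n => G.α n (b : A)) '' N') : Set (N →₀ ℝ)) ∩
            G.root (b : A) := hv
      have hroot := hv'.2
      rw [G.ax3 (b : A)] at hroot
      rcases hroot with hp | hp
      · left
        refine ⟨hv, ?_⟩
        exact (GRS.v_mem_nspan_iff G N' A' φ hφ v).mpr
          ((GRS.psi_mem_nspan_iff G N' A' φ hφ b v).mp hp.2)
      · right
        rw [Set.mem_neg] at hp ⊢
        have hneg : GRS.psi G N' A' φ b (-v) = -(GRS.psi G N' A' φ b v) := map_neg _ _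
        constructor
        · have hm : GRS.psi G N' A' φ b (-v) ∈
              (AddSubgroup.closure ((fun n => G.α n (b : A)) '' N') : Set (N →₀ ℝ)) ∩
                G.root (b : A) := by
            rw [hneg]
            exact ⟨neg_mem hv'.1, hp.1⟩
          exact hm
        · refine (GRS.v_mem_nspan_iff G N' A' φ hφ (-v)).mpr ?_
          refine (GRS.psi_mem_nspan_iff G N' A' φ hφ b (-v)).mp ?_
          rw [hneg]
          exact hp.2
    · intro v hv
      rcases hv with hv | hv
      · exact hv.1
      · rw [Set.mem_neg] at hv
        have h1 : GRS.psi G N' A' φ b (-v) ∈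
            (AddSubgroup.closure ((fun n => G.α n (b : A)) '' N') : Set (N →₀ ℝ)) ∩
              G.root (b : A) := hv.1
        rw [map_neg] at h1
        have hm : GRS.psi G N' A' φ b v ∈
            (AddSubgroup.closure ((fun n => G.α n (b : A)) '' N') : Set (N →₀ ℝ)) ∩
              G.root (b : A) :=
          ⟨by simpa using neg_mem h1.1, by simpa using G.neg_mem_root h1.2⟩
        exact hm
  -- ax4
  · intro i b
    ext v
    simp only [Set.mem_inter_iff, Set.mem_range, Set.mem_insert_iff, Set.mem_singleton_iff]
    constructor
    · rintro ⟨⟨r, rfl⟩, hv⟩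
      have hv' : GRS.psi G N' A' φ b (r • Finsupp.single i 1) ∈
          (AddSubgroup.closure ((fun n => G.α n (b : A)) '' N') : Set (N →₀ ℝ)) ∩
            G.root (b : A) := hv
      have hpsi : GRS.psi G N' A' φ b (r • Finsupp.single i 1) = r • G.α (i : N) (b : A) := by
        rw [map_smul, GRS.psi_single_one G N' A' φ hφ]
      have h4 : r • G.α (i : N) (b : A) ∈
          ({G.α (i : N) (b : A), -G.α (i : N) (b : A)} : Set (N →₀ ℝ)) := by
        rw [← G.ax4 (i : N) (b : A)]
        exact ⟨⟨r, rfl⟩, by rw [← hpsi]; exact hv'.2⟩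
      simp only [Set.mem_insert_iff, Set.mem_singleton_iff] at h4
      rcases h4 with h | h
      · left
        apply GRS.psi_inj G N' A' φ b
        rw [hpsi, GRS.psi_single_one G N' A' φ hφ b i]
        exact h
      · right
        apply GRS.psi_inj G N' A' φ b
        rw [hpsi, map_neg, GRS.psi_single_one G N' A' φ hφ b i]
        exact h
    · rintro (rfl | rfl)
      · refine ⟨⟨1, one_smul _ _⟩, ?_⟩
        have hm : GRS.psi G N' A' φ b (Finsupp.single i 1) ∈
            (AddSubgroup.closure ((fun n => G.α n (b : A)) '' N') : Set (N →₀ ℝ)) ∩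
              G.root (b : A) := by
          rw [GRS.psi_single_one G N' A' φ hφ]
          exact ⟨AddSubgroup.subset_closure (Set.mem_image_of_mem _ i.2), G.α_mem _ _⟩
        exact hm
      · refine ⟨⟨-1, by rw [neg_one_smul]⟩, ?_⟩
        have hm : GRS.psi G N' A' φ b (-Finsupp.single i 1) ∈
            (AddSubgroup.closure ((fun n => G.α n (b : A)) '' N') : Set (N →₀ ℝ)) ∩
              G.root (b : A) := by
          rw [map_neg, GRS.psi_single_one G N' A' φ hφ]
          exact ⟨neg_mem (AddSubgroup.subset_closure (Set.mem_image_of_mem _ i.2)),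
            G.neg_mem_root (G.α_mem _ _)⟩
        exact hm
  -- ax5_root
  · intro i b
    apply Set.Subset.antisymm
    · rintro w ⟨v, hv, rfl⟩
      exact Hmem i b (actL i b) rfl v hv
    · intro w hw
      have hb : (b : A) = G.act (i : N) ((actL i b : A') : A) :=
        (G.act_invol (i : N) (b : A)).symm
      exact ⟨GRS.rσ G N' A' φ hclosed i (actL i b) w,
        Hmem i (actL i b) b hb w hw, Hinv i (actL i b) b hb w⟩
  -- ax5_diag
  · intro i b
    apply GRS.psi_inj G N' A' φ (actL i b)
    rw [Hpt i b (actL i b) rfl, GRS.psi_single_one G N' A' φ hφ b i, map_neg,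
      GRS.psi_single_one G N' A' φ hφ (actL i b) i]
    exact G.ax5_diag (i : N) (b : A)
  -- ax5_off
  · intro i b j hji
    obtain ⟨m, hm⟩ := G.ax5_off (i : N) (b : A) (j : N) (fun h => hji (Subtype.ext h))
    refine ⟨m, ?_⟩
    apply GRS.psi_inj G N' A' φ (actL i b)
    rw [Hpt i b (actL i b) rfl, GRS.psi_single_one G N' A' φ hφ b j, hm, map_add, map_smul,
      GRS.psi_single_one G N' A' φ hφ (actL i b) j,
      GRS.psi_single_one G N' A' φ hφ (actL i b) i]
  -- ax7
  · intro b i j hij hfin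
    have hijN : (i : N) ≠ (j : N) := fun h => hij (Subtype.ext h)
    have hTcoe : ∀ (p q : N') (m : ℕ),
        ((altIter actL p q b m : A') : A) = altIter G.act (p : N) (q : N) (b : A) m := by
      intro p q m
      induction m with
      | zero => rfl
      | succ m ih =>
        show G.act (p : N) (G.act (q : N) ((altIter actL p q b m : A') : A)) = _
        rw [ih]
        rfl
    have hTset : Subtype.val '' ThetaSet actL i j b
        = ThetaSet G.act (i : N) (j : N) (b : A) := by
      apply Set.Subset.antisymm
      · rintro _ ⟨x, ⟨m, hx | hx⟩, rfl⟩
        · exact ⟨m, Or.inl (by rw [hx, hTcoe])⟩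
        · exact ⟨m, Or.inr (by rw [hx, hTcoe])⟩
      · rintro y ⟨m, hy | hy⟩
        · exact ⟨altIter actL i j b m, ⟨m, Or.inl rfl⟩, by rw [hTcoe, ← hy]⟩
        · exact ⟨altIter actL j i b m, ⟨m, Or.inr rfl⟩, by rw [hTcoe, ← hy]⟩
    have hψcomp : ∀ p q : ℕ,
        GRS.psi G N' A' φ b ((p : ℝ) • Finsupp.single i 1 + (q : ℝ) • Finsupp.single j 1)
          = (p : ℝ) • G.α (i : N) (b : A) + (q : ℝ) • G.α (j : N) (b : A) := by
      intro p q
      rw [map_add, map_smul, map_smul, GRS.psi_single_one G N' A' φ hφ b i,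
        GRS.psi_single_one G N' A' φ hφ b j]
    have himg : (fun v => GRS.psi G N' A' φ b v) ''
        ({v : N' →₀ ℝ |
          ((φ b).symm v : N →₀ ℝ) ∈
            (AddSubgroup.closure ((fun n => G.α n (b : A)) '' N') : Set (N →₀ ℝ)) ∩
              G.root (b : A)} ∩
          {β : N' →₀ ℝ | ∃ p q : ℕ,
            β = (p : ℝ) • Finsupp.single i 1 + (q : ℝ) • Finsupp.single j 1})
        = G.root (b : A) ∩ {β | ∃ p q : ℕ,
            β = (p : ℝ) • G.α (i : N) (b : A) + (q : ℝ) • G.α (j : N) (b : A)} := by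
      apply Set.Subset.antisymm
      · rintro _ ⟨v, ⟨hv1, p, q, rfl⟩, rfl⟩
        have hv1' : GRS.psi G N' A' φ b
            ((p : ℝ) • Finsupp.single i 1 + (q : ℝ) • Finsupp.single j 1) ∈
            (AddSubgroup.closure ((fun n => G.α n (b : A)) '' N') : Set (N →₀ ℝ)) ∩
              G.root (b : A) := hv1
        refine ⟨?_, p, q, hψcomp p q⟩
        exact hv1'.2
      · rintro β ⟨hβ, p, q, rfl⟩
        refine ⟨(p : ℝ) • Finsupp.single i 1 + (q : ℝ) • Finsupp.single j 1,
          ⟨⟨?_, ?_⟩, p, q, rfl⟩, hψcomp p q⟩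
        · show GRS.psi G N' A' φ b _ ∈ _
          rw [hψcomp p q, Nat.cast_smul_eq_nsmul, Nat.cast_smul_eq_nsmul]
          exact add_mem
            (nsmul_mem (AddSubgroup.subset_closure (Set.mem_image_of_mem _ i.2)) p)
            (nsmul_mem (AddSubgroup.subset_closure (Set.mem_image_of_mem _ j.2)) q)
        · show GRS.psi G N' A' φ b _ ∈ G.root (b : A)
          rw [hψcomp p q]
          exact hβ
    have hfin' : (G.root (b : A) ∩ {β | ∃ p q : ℕ,
        β = (p : ℝ) • G.α (i : N) (b : A) + (q : ℝ) • G.α (j : N) (b : A)}).Finite := by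
      rw [← himg]
      exact hfin.image _
    obtain ⟨hTfin, hdvd⟩ := G.ax7 (b : A) (i : N) (j : N) hijN hfin'
    constructor
    · have h1 : (Subtype.val '' ThetaSet actL i j b).Finite := by
        rw [hTset]
        exact hTfin
      exact Set.Finite.of_finite_image h1 Subtype.val_injective.injOn
    · calc (ThetaSet actL i j b).ncard
          = (ThetaSet G.act (i : N) (j : N) (b : A)).ncard := by
            rw [← Set.ncard_image_of_injective (ThetaSet actL i j b) Subtype.val_injective,
              hTset]
        _ ∣ (G.root (b : A) ∩ {β | ∃ p q : ℕ,
              β = (p : ℝ) • G.α (i : N) (b : A) + (q : ℝ) • G.α (j : N) (b : A)}).ncard := hdvd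
        _ = _ := by
            rw [← himg, Set.ncard_image_of_injective _ (GRS.psi_inj G N' A' φ b)]
  -- conclusion 4
  · intro i b c hc v
    rw [← GRS.psi_apply, ← GRS.psi_apply]
    exact Hpt i b c hc v
end
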